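/- Let X_1,…,X_T be i.i.d. random vectors in ℝ^m with ‖X_t‖_∞ ≤ L almost surely, let Σ = E[X_1 X_1ᵀ] and Σ̂ = (1/T)Σ_t X_t X_tᵀ. Fix S* ⊆ {1,…,m} with |S*| = K ≥ 1 and suppose: Σ_{jj} ≥ ν_min > 0 for all j; the population coherence μ(Σ) = max_{i≠j}|Σ_{ij}|/√(Σ_{ii}Σ_{jj}) satisfies μ(Σ) < 1/(4K); and the population restricted eigenvalue satisfies inf{ uᵀΣu/‖u_{S*}‖₂² : u ≠ 0, ‖u_{(S*)ᶜ}‖₁ ≤ 3‖u_{S*}‖₁ } ≥ κ_Σ² > 0. Then there exist constants C₀, c₇, c₈ > 0 depending only on L, ν_min, μ(Σ), and κ_Σ such that if T ≥ C₀ K² log m, then with probability at least 1 − c₇ m^{−c₈} the following hold simultaneously: (i) the empirical coherence μ(Σ̂) = max_{i≠j}|Σ̂_{ij}|/√(Σ̂_{ii}Σ̂_{jj}) satisfies μ(Σ̂) < 1/(2K−1); and (ii) inf{ uᵀΣ̂u/‖u_{S*}‖₂² : u ≠ 0, ‖u_{(S*)ᶜ}‖₁ ≤ 3‖u_{S*}‖₁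 } ≥ κ_Σ²/2. -/

import Mathlib

open MeasureTheory ProbabilityTheory Finset
open scoped ENNReal

lemma exp_le_quadratic {x : ℝ} (hx : x ≤ 1) : Real.exp x ≤ 1 + x + x ^ 2 := by
  rcases le_or_gt (-1) x with h | h
  · have hb := Real.exp_bound (x := x) (by rw [abs_le]; exact ⟨h, hx⟩) (n := 2) (by norm_num)
    have : Real.exp x - (1 + x) ≤ |x| ^ 2 * (3 / (2 * 2)) := by
      have := (abs_le.mp hb).2
      simpa [Finset.sum_range_succ] using this
    nlinarith [sq_abs x, sq_nonneg x]
  · have h1 : Real.exp x ≤ Real.exp (-1) := Real.exp_le_exp.mpr h.le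
    have h2 : Real.exp (-1) < 1 := by
      rw [Real.exp_lt_one_iff]; norm_num
    nlinarith [sq_nonneg (x + 1)]

lemma mgf_le_of_bounded {Ω : Type} [MeasurableSpace Ω] {Pr : Measure Ω}
    [IsProbabilityMeasure Pr] {Z : Ω → ℝ} {B t : ℝ}
    (hmeas : Measurable Z) (hbdd : ∀ᵐ ω ∂Pr, |Z ω| ≤ B)
    (hmean : ∫ ω, Z ω ∂Pr = 0) (ht0 : 0 ≤ t) (htB : t * B ≤ 1) :
    mgf Z Pr t ≤ Real.exp (t ^ 2 * B ^ 2) := by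
  have hZint : Integrable Z Pr :=
    (integrable_const B).mono' hmeas.aestronglyMeasurable
      (hbdd.mono fun ω h => by simpa using h)
  have hZ2int : Integrable (fun ω => Z ω ^ 2) Pr :=
    (integrable_const (B ^ 2)).mono' (hmeas.pow_const 2).aestronglyMeasurable
      (hbdd.mono fun ω h => by
        simp only [norm_pow, Real.norm_eq_abs, abs_abs, ← sq_abs (Z ω)]
        exact pow_le_pow_left₀ (abs_nonneg _) h 2)
  have hgint : Integrable (fun ω => 1 + t * Z ω + t ^ 2 * Z ω ^ 2) Pr := by
    exact ((integrable_const 1).add (hZint.const_mul t)).add (hZ2int.const_mul (t ^ 2))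
  have hle : ∀ᵐ ω ∂Pr, Real.exp (t * Z ω) ≤ 1 + t * Z ω + t ^ 2 * Z ω ^ 2 := by
    filter_upwards [hbdd] with ω h
    have h1 : t * Z ω ≤ 1 := by
      calc t * Z ω ≤ t * B := by nlinarith [abs_le.mp h]
        _ ≤ 1 := htB
    calc Real.exp (t * Z ω) ≤ 1 + t * Z ω + (t * Z ω) ^ 2 := exp_le_quadratic h1
      _ = 1 + t * Z ω + t ^ 2 * Z ω ^ 2 := by ring
  have key : mgf Z Pr t ≤ ∫ ω, (1 + t * Z ω + t ^ 2 * Z ω ^ 2) ∂Pr := by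
    refine integral_mono_of_nonneg ?_ hgint hle
    exact Filter.Eventually.of_forall fun ω => (Real.exp_pos _).le
  have hZ2le : ∫ ω, Z ω ^ 2 ∂Pr ≤ B ^ 2 := by
    calc ∫ ω, Z ω ^ 2 ∂Pr ≤ ∫ _ω, B ^ 2 ∂Pr := by
          refine integral_mono_ae hZ2int (integrable_const _) ?_
          filter_upwards [hbdd] with ω h
          rw [← sq_abs]
          exact pow_le_pow_left₀ (abs_nonneg _) h 2
      _ = B ^ 2 := by simp
  have hval : ∫ ω, (1 + t * Z ω + t ^ 2 * Z ω ^ 2) ∂Pr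
      = 1 + t ^ 2 * ∫ ω, Z ω ^ 2 ∂Pr := by
    have hf1 : Integrable (fun ω => 1 + t * Z ω) Pr := by
      simpa using (integrable_const (1:ℝ)).add (hZint.const_mul t)
    have hf2 : Integrable (fun ω => t ^ 2 * Z ω ^ 2) Pr := hZ2int.const_mul (t ^ 2)
    calc ∫ ω, (1 + t * Z ω + t ^ 2 * Z ω ^ 2) ∂Pr
        = (∫ ω, (1 + t * Z ω) ∂Pr) + ∫ ω, t ^ 2 * Z ω ^ 2 ∂Pr := integral_add hf1 hf2
      _ = ((∫ _ω, (1:ℝ) ∂Pr) + ∫ ω, t * Z ω ∂Pr) + ∫ ω, t ^ 2 * Z ω ^ 2 ∂Pr := by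
          rw [integral_add (integrable_const 1) (hZint.const_mul t)]
      _ = 1 + t ^ 2 * ∫ ω, Z ω ^ 2 ∂Pr := by
          rw [integral_const_mul, integral_const_mul, hmean]
          simp
  calc mgf Z Pr t ≤ 1 + t ^ 2 * ∫ ω, Z ω ^ 2 ∂Pr := by rw [← hval]; exact key
    _ ≤ 1 + t ^ 2 * B ^ 2 := by nlinarith [sq_nonneg t]
    _ ≤ Real.exp (t ^ 2 * B ^ 2) := by linarith [Real.add_one_le_exp (t ^ 2 * B ^ 2)]

lemma chernoff_sum {Ω : Type} [MeasurableSpace Ω] {Pr : Measure Ω}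
    [IsProbabilityMeasure Pr] {T : ℕ} {Z : Fin T → Ω → ℝ} {B ε : ℝ}
    (hB : 0 < B) (hε : 0 < ε) (hεB : ε ≤ 2 * B)
    (hmeas : ∀ t, Measurable (Z t))
    (hindep : iIndepFun Z Pr)
    (hbdd : ∀ t, ∀ᵐ ω ∂Pr, |Z t ω| ≤ B)
    (hmean : ∀ t, ∫ ω, Z t ω ∂Pr = 0) :
    Pr {ω | (T : ℝ) * ε ≤ ∑ t, Z t ω} ≤
      ENNReal.ofReal (Real.exp (-((T : ℝ) * ε ^ 2 / (4 * B ^ 2)))) := by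
  set s : ℝ := ε / (2 * B ^ 2) with hs
  have hs0 : 0 ≤ s := div_nonneg hε.le (by positivity)
  have hsB : s * B ≤ 1 := by
    rw [hs, div_mul_eq_mul_div, div_le_one (by positivity)]
    nlinarith
  have hint : ∀ t : Fin T, Integrable (fun ω => Real.exp (s * Z t ω)) Pr := by
    intro t
    refine (integrable_const (Real.exp (s * B))).mono'
      ((hmeas t).const_mul s).exp.aestronglyMeasurable ?_
    filter_upwards [hbdd t] with ω h
    rw [Real.norm_eq_abs, abs_of_pos (Real.exp_pos _), Real.exp_le_exp]
    nlinarith [abs_le.mp h]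
  have hintsum : Integrable (fun ω => Real.exp (s * (∑ t, Z t) ω)) Pr :=
    hindep.integrable_exp_mul_sum hmeas (fun i _ => hint i)
  have hcher := measure_ge_le_exp_mul_mgf (X := ∑ t, Z t) (μ := Pr)
    ((T : ℝ) * ε) hs0 hintsum
  have hmgf : mgf (∑ t, Z t) Pr s ≤ Real.exp ((T : ℝ) * (s ^ 2 * B ^ 2)) := by
    rw [hindep.mgf_sum hmeas]
    calc ∏ t : Fin T, mgf (Z t) Pr s
        ≤ ∏ _t : Fin T, Real.exp (s ^ 2 * B ^ 2) := by
          refine Finset.prod_le_prod (fun i _ => mgf_nonneg) (fun i _ => ?_)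
          exact mgf_le_of_bounded (hmeas i) (hbdd i) (hmean i) hs0 hsB
      _ = Real.exp ((T : ℝ) * (s ^ 2 * B ^ 2)) := by
          rw [Finset.prod_const, ← Real.exp_nat_mul]
          simp
  have hset : {ω | (T : ℝ) * ε ≤ ∑ t, Z t ω}
      = {ω | (T : ℝ) * ε ≤ (∑ t, Z t) ω} := by
    ext ω; simp [Finset.sum_apply]
  have hbound : (Pr {ω | (T : ℝ) * ε ≤ (∑ t, Z t) ω}).toReal ≤
      Real.exp (-((T : ℝ) * ε ^ 2 / (4 * B ^ 2))) := by
    refine hcher.trans ?_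
    calc Real.exp (-s * ((T : ℝ) * ε)) * mgf (∑ t, Z t) Pr s
        ≤ Real.exp (-s * ((T : ℝ) * ε)) * Real.exp ((T : ℝ) * (s ^ 2 * B ^ 2)) := by
          refine mul_le_mul_of_nonneg_left hmgf (Real.exp_pos _).le
      _ = Real.exp (-s * ((T : ℝ) * ε) + (T : ℝ) * (s ^ 2 * B ^ 2)) := by
          rw [← Real.exp_add]
      _ ≤ Real.exp (-((T : ℝ) * ε ^ 2 / (4 * B ^ 2))) := by
          rw [Real.exp_le_exp]
          have : s = ε / (2 * B ^ 2) := hs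
          rw [this]
          field_simp
          ring_nf
          nlinarith [Nat.cast_nonneg (α := ℝ) T, sq_nonneg ε, sq_nonneg B]
  rw [hset]
  have hne : Pr {ω | (T : ℝ) * ε ≤ (∑ t, Z t) ω} ≠ ⊤ := measure_ne_top _ _
  rw [← ENNReal.ofReal_toReal hne]
  exact ENNReal.ofReal_le_ofReal hbound

lemma chernoff_two_sided {Ω : Type} [MeasurableSpace Ω] {Pr : Measure Ω}
    [IsProbabilityMeasure Pr] {T : ℕ} {Z : Fin T → Ω → ℝ} {B ε : ℝ}
    (hB : 0 < B) (hε : 0 < ε) (hεB : ε ≤ 2 * B) (hT : 0 < T)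
    (hmeas : ∀ t, Measurable (Z t))
    (hindep : iIndepFun Z Pr)
    (hbdd : ∀ t, ∀ᵐ ω ∂Pr, |Z t ω| ≤ B)
    (hmean : ∀ t, ∫ ω, Z t ω ∂Pr = 0) :
    Pr {ω | ε < |(1 / (T : ℝ)) * ∑ t, Z t ω|} ≤
      ENNReal.ofReal (2 * Real.exp (-((T : ℝ) * ε ^ 2 / (4 * B ^ 2)))) := by
  have hTpos : (0:ℝ) < T := by exact_mod_cast hT
  have hsub : {ω | ε < |(1 / (T : ℝ)) * ∑ t, Z t ω|} ⊆
      {ω | (T : ℝ) * ε ≤ ∑ t, Z t ω} ∪ {ω | (T : ℝ) * ε ≤ ∑ t, (fun t ω => -Z t ω) t ω} := by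
    intro ω hω
    simp only [Set.mem_setOf_eq, Set.mem_union] at hω ⊢
    rw [abs_mul, abs_of_pos (by positivity : (0:ℝ) < 1 / (T:ℝ)), one_div,
      inv_mul_eq_div, lt_div_iff₀ hTpos] at hω
    have h2 : (T : ℝ) * ε < |∑ t, Z t ω| := by linarith [hω]
    rcases lt_abs.mp h2 with h | h
    · exact Or.inl h.le
    · refine Or.inr ?_
      have hsum : ∑ t, -Z t ω = -(∑ t, Z t ω) := by
        rw [← Finset.sum_neg_distrib]
      rw [hsum]
      linarith
  refine (measure_mono hsub).trans ((measure_union_le _ _).trans ?_)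
  have h1 := chernoff_sum hB hε hεB hmeas hindep hbdd hmean
  have hmeas' : ∀ t, Measurable (fun ω => -Z t ω) := fun t => (hmeas t).neg
  have hindep' : iIndepFun (fun t ω => -Z t ω) Pr :=
    hindep.comp (fun _ => Neg.neg) (fun _ => measurable_neg)
  have hbdd' : ∀ t, ∀ᵐ ω ∂Pr, |(fun ω => -Z t ω) ω| ≤ B := by
    intro t; filter_upwards [hbdd t] with ω h; simpa using h
  have hmean' : ∀ t, ∫ ω, -Z t ω ∂Pr = 0 := by
    intro t; rw [integral_neg, hmean t]; simp
  have h2 := chernoff_sum hB hε hεB hmeas' hindep' hbdd' hmean'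
  calc Pr {ω | (T : ℝ) * ε ≤ ∑ t, Z t ω} + Pr {ω | (T : ℝ) * ε ≤ ∑ t, -Z t ω}
      ≤ ENNReal.ofReal (Real.exp (-((T : ℝ) * ε ^ 2 / (4 * B ^ 2)))) +
        ENNReal.ofReal (Real.exp (-((T : ℝ) * ε ^ 2 / (4 * B ^ 2)))) := add_le_add h1 h2
    _ = ENNReal.ofReal (2 * Real.exp (-((T : ℝ) * ε ^ 2 / (4 * B ^ 2)))) := by
        rw [← ENNReal.ofReal_add (Real.exp_pos _).le (Real.exp_pos _).le]
        ring_nf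

lemma coh_det {k νmin ε Sii Sjj Sij Hii Hjj Hij : ℝ}
    (hk : 1 ≤ k) (hν : 0 < νmin)
    (hε : ε ≤ νmin / (16 * k))
    (hSii : νmin ≤ Sii) (hSjj : νmin ≤ Sjj)
    (hcoh : |Sij| / Real.sqrt (Sii * Sjj) < 1 / (4 * k))
    (hdi : |Hii - Sii| ≤ ε) (hdj : |Hjj - Sjj| ≤ ε) (hdij : |Hij - Sij| ≤ ε) :
    |Hij| / Real.sqrt (Hii * Hjj) < 1 / (2 * k - 1) := by
  have hk0 : (0:ℝ) < k := lt_of_lt_of_le one_pos hk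
  set s : ℝ := Real.sqrt (Sii * Sjj) with hs
  have hνs : νmin ≤ s := by
    rw [hs, show νmin = Real.sqrt (νmin ^ 2) from (Real.sqrt_sq hν.le).symm]
    apply Real.sqrt_le_sqrt; nlinarith
  have hs0 : 0 < s := lt_of_lt_of_le hν hνs
  have h16 : (0:ℝ) < 1 - 1 / (16 * k) := by
    rw [sub_pos, div_lt_one (by positivity)]; linarith
  have hεs : ε ≤ s / (16 * k) := hε.trans (by gcongr)
  have hnum : |Hij| < 5 * s / (16 * k) := by
    have h1 : |Sij| < s / (4 * k) := by
      rw [div_lt_iff₀ (by positivity)] at hcoh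
      calc |Sij| < 1 / (4 * k) * s := hcoh
        _ = s / (4 * k) := by ring
    calc |Hij| ≤ |Sij| + ε := by
          have := abs_sub_abs_le_abs_sub Hij Sij
          linarith [hdij]
      _ < s / (4 * k) + s / (16 * k) := by linarith
      _ = 5 * s / (16 * k) := by ring
  have hHii : Sii * (1 - 1 / (16 * k)) ≤ Hii := by
    have hεi : ε ≤ Sii / (16 * k) := hε.trans (by gcongr)
    have := abs_le.mp hdi
    calc Sii * (1 - 1 / (16 * k)) = Sii - Sii / (16 * k) := by ring
      _ ≤ Sii - ε := by linarith
      _ ≤ Hii := by linarith [this.1]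
  have hHjj : Sjj * (1 - 1 / (16 * k)) ≤ Hjj := by
    have hεj : ε ≤ Sjj / (16 * k) := hε.trans (by gcongr)
    have := abs_le.mp hdj
    calc Sjj * (1 - 1 / (16 * k)) = Sjj - Sjj / (16 * k) := by ring
      _ ≤ Sjj - ε := by linarith
      _ ≤ Hjj := by linarith [this.1]
  have hSii0 : 0 < Sii := lt_of_lt_of_le hν hSii
  have hSjj0 : 0 < Sjj := lt_of_lt_of_le hν hSjj
  have hprod : (Sii * Sjj) * (1 - 1 / (16 * k)) ^ 2 ≤ Hii * Hjj := by
    have h2 := mul_le_mul hHii hHjj (mul_nonneg hSjj0.le h16.le)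
      (le_trans (mul_nonneg hSii0.le h16.le) hHii)
    calc (Sii * Sjj) * (1 - 1 / (16 * k)) ^ 2
        = (Sii * (1 - 1 / (16 * k))) * (Sjj * (1 - 1 / (16 * k))) := by ring
      _ ≤ Hii * Hjj := h2
  have hD : s * (1 - 1 / (16 * k)) ≤ Real.sqrt (Hii * Hjj) := by
    have : Real.sqrt ((Sii * Sjj) * (1 - 1 / (16 * k)) ^ 2) = s * (1 - 1 / (16 * k)) := by
      rw [Real.sqrt_mul (by nlinarith), Real.sqrt_sq h16.le]
    rw [← this]
    exact Real.sqrt_le_sqrt hprod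
  have hD0 : 0 < s * (1 - 1 / (16 * k)) := mul_pos hs0 h16
  have hK1 : (0:ℝ) < 2 * k - 1 := by linarith
  calc |Hij| / Real.sqrt (Hii * Hjj)
      ≤ (5 * s / (16 * k)) / (s * (1 - 1 / (16 * k))) :=
        div_le_div₀ (by positivity) hnum.le hD0 hD
    _ < 1 / (2 * k - 1) := by
        rw [div_lt_div_iff₀ hD0 hK1]
        have key : 5 * s * (2 * k - 1) < s * (16 * k - 1) := by nlinarith
        calc 5 * s / (16 * k) * (2 * k - 1) = 5 * s * (2 * k - 1) / (16 * k) := by ring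
          _ < s * (16 * k - 1) / (16 * k) := (div_lt_div_iff_of_pos_right (by positivity)).mpr key
          _ = 1 * (s * (1 - 1 / (16 * k))) := by field_simp

lemma re_det {m : ℕ} {K : ℕ} (hK : 1 ≤ K) {kS ε : ℝ}
    {Sstar : Finset (Fin m)} (hcard : Sstar.card = K)
    {Sig H : Fin m → Fin m → ℝ}
    (hε0 : 0 ≤ ε) (hε : ε ≤ kS ^ 2 / (32 * (K : ℝ)))
    (hdev : ∀ i j, |H i j - Sig i j| ≤ ε)
    (u : Fin m → ℝ)
    (hcone : (∑ j ∈ Sstarᶜ, |u j|) ≤ 3 * ∑ j ∈ Sstar, |u j|)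
    (hre : kS ^ 2 * (∑ j ∈ Sstar, u j ^ 2) ≤ ∑ i, ∑ j, u i * Sig i j * u j) :
    kS ^ 2 / 2 * (∑ j ∈ Sstar, u j ^ 2) ≤ ∑ i, ∑ j, u i * H i j * u j := by
  have hK0 : (0:ℝ) < K := by exact_mod_cast hK
  set A : ℝ := ∑ j ∈ Sstar, u j ^ 2 with hA
  have hA0 : 0 ≤ A := Finset.sum_nonneg fun j _ => sq_nonneg _
  have hl1 : (∑ j, |u j|) ≤ 4 * ∑ j ∈ Sstar, |u j| := by
    rw [← Finset.sum_add_sum_compl Sstar (fun j => |u j|)]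
    linarith
  have hCS : (∑ j ∈ Sstar, |u j|) ^ 2 ≤ (K : ℝ) * A := by
    have := sq_sum_le_card_mul_sum_sq (s := Sstar) (f := fun j => |u j|)
    simp only [sq_abs] at this
    rw [hcard] at this
    exact_mod_cast this
  have hpert : |∑ i, ∑ j, u i * (H i j - Sig i j) * u j| ≤ ε * (∑ j, |u j|) ^ 2 := by
    calc |∑ i, ∑ j, u i * (H i j - Sig i j) * u j|
        ≤ ∑ i, |∑ j, u i * (H i j - Sig i j) * u j| := Finset.abs_sum_le_sum_abs _ _
      _ ≤ ∑ i, ∑ j, |u i * (H i j - Sig i j) * u j| := by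
          exact Finset.sum_le_sum fun i _ => Finset.abs_sum_le_sum_abs _ _
      _ ≤ ∑ i, ∑ j, |u i| * ε * |u j| := by
          refine Finset.sum_le_sum fun i _ => Finset.sum_le_sum fun j _ => ?_
          rw [abs_mul, abs_mul]
          have h2 : |u i| * |H i j - Sig i j| ≤ |u i| * ε :=
            mul_le_mul_of_nonneg_left (hdev i j) (abs_nonneg _)
          exact mul_le_mul_of_nonneg_right h2 (abs_nonneg _)
      _ = ε * (∑ j, |u j|) ^ 2 := by
          rw [sq, Finset.sum_mul_sum, Finset.mul_sum]
          refine Finset.sum_congr rfl fun i _ => ?_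
          rw [Finset.mul_sum]
          refine Finset.sum_congr rfl fun j _ => ?_
          ring
  have hl1sq : (∑ j, |u j|) ^ 2 ≤ 16 * ((K : ℝ) * A) := by
    have h0 : 0 ≤ ∑ j, |u j| := Finset.sum_nonneg fun j _ => abs_nonneg _
    calc (∑ j, |u j|) ^ 2 ≤ (4 * ∑ j ∈ Sstar, |u j|) ^ 2 := by
          exact pow_le_pow_left₀ h0 hl1 2
      _ = 16 * (∑ j ∈ Sstar, |u j|) ^ 2 := by ring
      _ ≤ 16 * ((K : ℝ) * A) := by linarith
  have hsplit : ∑ i, ∑ j, u i * H i j * u j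
      = (∑ i, ∑ j, u i * Sig i j * u j) + ∑ i, ∑ j, u i * (H i j - Sig i j) * u j := by
    rw [← Finset.sum_add_distrib]
    refine Finset.sum_congr rfl fun i _ => ?_
    rw [← Finset.sum_add_distrib]
    refine Finset.sum_congr rfl fun j _ => ?_
    ring
  have hεbound : ε * (∑ j, |u j|) ^ 2 ≤ kS ^ 2 / 2 * A := by
    calc ε * (∑ j, |u j|) ^ 2 ≤ ε * (16 * ((K : ℝ) * A)) :=
          mul_le_mul_of_nonneg_left hl1sq hε0
      _ ≤ kS ^ 2 / (32 * (K : ℝ)) * (16 * ((K : ℝ) * A)) := by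
          refine mul_le_mul_of_nonneg_right hε ?_
          positivity
      _ = kS ^ 2 / 2 * A := by field_simp; ring
  have habs := abs_le.mp hpert
  rw [hsplit]
  have hre' : kS ^ 2 * A ≤ ∑ i, ∑ j, u i * Sig i j * u j := hre
  linarith [habs.1]

theorem stmt13 (L νmin kS : ℝ) (hL : 0 < L) (hν : 0 < νmin) (hκ : 0 < kS) :
    ∃ C₀ c₇ c₈ : ℝ, 0 < C₀ ∧ 0 < c₇ ∧ 0 < c₈ ∧
      ∀ (T m K : ℕ), 1 ≤ K →
      ∀ (Ω : Type) (_ : MeasurableSpace Ω) (Pr : Measure Ω),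
        IsProbabilityMeasure Pr →
      ∀ (X : Fin T → Ω → Fin m → ℝ) (Sstar : Finset (Fin m))
        (Sig : Matrix (Fin m) (Fin m) ℝ),
        Sstar.card = K →
        (∀ t, Measurable (X t)) →
        -- the episodes are i.i.d. ...
        iIndepFun X Pr →
        (∀ t t', Measure.map (X t) Pr = Measure.map (X t') Pr) →
        -- ... bounded by `L` in sup-norm almost surely
        (∀ t, ∀ᵐ ω ∂Pr, ∀ i, |X t ω i| ≤ L) →
        -- `Sig = E[X₁ X₁ᵀ]`
        (∀ t i j, Sig i j = ∫ ω, X t ω i * X t ω j ∂Pr) →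
        -- diagonal bounded away from zero
        (∀ j, νmin ≤ Sig j j) →
        -- population coherence `μ(Σ) < 1/(4K)`
        (∀ i j, i ≠ j →
          |Sig i j| / Real.sqrt (Sig i i * Sig j j) < 1 / (4 * (K : ℝ))) →
        -- population restricted eigenvalue `≥ kS²` on the cone of order 3 over `S*`
        (∀ u : Fin m → ℝ,
          (∑ j ∈ Sstarᶜ, |u j|) ≤ 3 * ∑ j ∈ Sstar, |u j| →
          kS ^ 2 * (∑ j ∈ Sstar, u j ^ 2) ≤ ∑ i, ∑ j, u i * Sig i j * u j) →
        -- sample size `T ≥ C₀ K² log m`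
        (C₀ * ((K : ℝ) ^ 2 * Real.log m) ≤ (T : ℝ)) →
        ENNReal.ofReal (1 - c₇ * (m : ℝ) ^ (-c₈)) ≤
          Pr {ω |
            -- (i) empirical coherence `μ(Σ̂) < 1/(2K−1)`
            (∀ i j, i ≠ j →
              |(1 / (T : ℝ)) * ∑ t, X t ω i * X t ω j| /
                  Real.sqrt (((1 / (T : ℝ)) * ∑ t, X t ω i * X t ω i) *
                    ((1 / (T : ℝ)) * ∑ t, X t ω j * X t ω j))
                < 1 / (2 * (K : ℝ) - 1)) ∧
            -- (ii) empirical restricted eigenvalue `≥ kS²/2`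
            (∀ u : Fin m → ℝ,
              (∑ j ∈ Sstarᶜ, |u j|) ≤ 3 * ∑ j ∈ Sstar, |u j| →
              kS ^ 2 / 2 * (∑ j ∈ Sstar, u j ^ 2)
                ≤ ∑ i, ∑ j, u i * ((1 / (T : ℝ)) * ∑ t, X t ω i * X t ω j) * u j)} := by
  classical
  set c : ℝ := min (νmin / 16) (kS ^ 2 / 32) with hc
  have hc0 : 0 < c := lt_min (by positivity) (by positivity)
  refine ⟨48 * L ^ 4 / c ^ 2, 2, 1, by positivity, by norm_num, by norm_num, ?_⟩
  intro T m K hK Ω mΩ Pr hPr X Sstar Sig hcard hmeas hindep _hident hbddL hSig hdiag hcoh hre hT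
  by_cases hm : m ≤ 1
  · interval_cases m
    · exfalso
      have h0 : Sstar.card ≤ 0 := by
        simpa using Finset.card_le_univ Sstar
      omega
    · have h1 : ((1:ℕ) : ℝ) ^ (-(1:ℝ)) = 1 := by
        simp [Real.one_rpow]
      rw [h1]
      rw [show (1:ℝ) - 2 * 1 = -1 by norm_num, ENNReal.ofReal_of_nonpos (by norm_num)]
      exact zero_le
  -- main case : m ≥ 2
  push_neg at hm
  have hm2 : 2 ≤ m := hm
  have hm0 : (0:ℝ) < m := by positivity
  have hm1 : (1:ℝ) < m := by exact_mod_cast hm2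
  have hk1 : (1:ℝ) ≤ (K:ℝ) := by exact_mod_cast hK
  have hk0 : (0:ℝ) < K := by linarith
  have hlog : 0 < Real.log m := Real.log_pos hm1
  set ε : ℝ := c / K with hεdef
  have hε0 : 0 < ε := div_pos hc0 hk0
  have hC0 : 0 < 48 * L ^ 4 / c ^ 2 := by positivity
  have hT1 : 0 < T := by
    by_contra h
    push_neg at h
    interval_cases T
    · simp only [Nat.cast_zero] at hT
      have hpos : 0 < 48 * L ^ 4 / c ^ 2 * ((K:ℝ) ^ 2 * Real.log m) :=
        mul_pos hC0 (mul_pos (by positivity) hlog)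
      linarith
  have hTpos : (0:ℝ) < T := by exact_mod_cast hT1
  have hεν : ε ≤ νmin / (16 * (K:ℝ)) := by
    have : ε ≤ (νmin / 16) / K := by
      rw [hεdef]; gcongr; exact min_le_left _ _
    rwa [div_div] at this
  have hεκ : ε ≤ kS ^ 2 / (32 * (K:ℝ)) := by
    have : ε ≤ (kS ^ 2 / 32) / K := by
      rw [hεdef]; gcongr; exact min_le_right _ _
    rwa [div_div] at this
  -- integrability and population bounds
  have hmeascoord : ∀ (t : Fin T) (i : Fin m), Measurable (fun ω => X t ω i) :=
    fun t i => (measurable_pi_apply i).comp (hmeas t)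
  have hintprod : ∀ (t : Fin T) (i j : Fin m),
      Integrable (fun ω => X t ω i * X t ω j) Pr := by
    intro t i j
    refine (integrable_const (L ^ 2)).mono'
      ((hmeascoord t i).mul (hmeascoord t j)).aestronglyMeasurable ?_
    filter_upwards [hbddL t] with ω h
    rw [Real.norm_eq_abs, abs_mul]
    calc |X t ω i| * |X t ω j| ≤ L * L :=
          mul_le_mul (h i) (h j) (abs_nonneg _) hL.le
      _ = L ^ 2 := by ring
  have t0 : Fin T := ⟨0, hT1⟩
  have hSigbdd : ∀ i j, |Sig i j| ≤ L ^ 2 := by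
    intro i j
    rw [hSig t0 i j]
    have := norm_integral_le_of_norm_le_const (μ := Pr)
      (f := fun ω => X t0 ω i * X t0 ω j) (C := L ^ 2) ?_
    · simpa using this
    · filter_upwards [hbddL t0] with ω h
      rw [Real.norm_eq_abs, abs_mul]
      calc |X t0 ω i| * |X t0 ω j| ≤ L * L :=
            mul_le_mul (h i) (h j) (abs_nonneg _) hL.le
        _ = L ^ 2 := by ring
  have hνL : νmin ≤ L ^ 2 := by
    have j0 : Fin m := ⟨0, by omega⟩
    calc νmin ≤ Sig j0 j0 := hdiag j0
      _ ≤ |Sig j0 j0| := le_abs_self _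
      _ ≤ L ^ 2 := hSigbdd j0 j0
  have hεB : ε ≤ 2 * (2 * L ^ 2) := by
    have h1 : ε ≤ νmin / (16 * (K:ℝ)) := hεν
    have h2 : νmin / (16 * (K:ℝ)) ≤ νmin := by
      rw [div_le_iff₀ (by positivity)]
      nlinarith
    linarith
  -- per-pair Chernoff bound
  have key : ∀ i j : Fin m,
      Pr {ω | ε < |(1 / (T : ℝ)) * ∑ t, X t ω i * X t ω j - Sig i j|} ≤
        ENNReal.ofReal (2 * Real.exp (-((T : ℝ) * ε ^ 2 / (16 * L ^ 4)))) := by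
    intro i j
    have hZmeas : ∀ t : Fin T, Measurable (fun ω => X t ω i * X t ω j - Sig i j) :=
      fun t => ((hmeascoord t i).mul (hmeascoord t j)).sub measurable_const
    have hZindep : iIndepFun
        (fun t ω => X t ω i * X t ω j - Sig i j) Pr :=
      hindep.comp (fun _ (v : Fin m → ℝ) => v i * v j - Sig i j)
        (fun _ => ((measurable_pi_apply i).mul (measurable_pi_apply j)).sub measurable_const)
    have hZbdd : ∀ t, ∀ᵐ ω ∂Pr, |X t ω i * X t ω j - Sig i j| ≤ 2 * L ^ 2 := by
      intro t
      filter_upwards [hbddL t] with ω h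
      have h1 : |X t ω i * X t ω j| ≤ L ^ 2 := by
        rw [abs_mul]
        calc |X t ω i| * |X t ω j| ≤ L * L :=
              mul_le_mul (h i) (h j) (abs_nonneg _) hL.le
          _ = L ^ 2 := by ring
      calc |X t ω i * X t ω j - Sig i j| ≤ |X t ω i * X t ω j| + |Sig i j| := abs_sub _ _
        _ ≤ L ^ 2 + L ^ 2 := add_le_add h1 (hSigbdd i j)
        _ = 2 * L ^ 2 := by ring
    have hZmean : ∀ t, ∫ ω, (X t ω i * X t ω j - Sig i j) ∂Pr = 0 := by
      intro t
      rw [integral_sub (hintprod t i j) (integrable_const _), integral_const]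
      simp [measure_univ, hSig t i j]
    have hch := chernoff_two_sided (B := 2 * L ^ 2) (ε := ε)
      (by positivity) hε0 hεB hT1 hZmeas hZindep hZbdd hZmean
    have hseteq : {ω | ε < |(1 / (T : ℝ)) * ∑ t, (X t ω i * X t ω j - Sig i j)|}
        = {ω | ε < |(1 / (T : ℝ)) * ∑ t, X t ω i * X t ω j - Sig i j|} := by
      ext ω
      have : (1 / (T : ℝ)) * ∑ t, (X t ω i * X t ω j - Sig i j)
          = (1 / (T : ℝ)) * ∑ t, X t ω i * X t ω j - Sig i j := by
        rw [Finset.sum_sub_distrib, Finset.sum_const, Finset.card_univ, Fintype.card_fin, nsmul_eq_mul]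
        field_simp
      simp only [Set.mem_setOf_eq, this]
    rw [← hseteq]
    have hexp : 4 * (2 * L ^ 2) ^ 2 = 16 * L ^ 4 := by ring
    rw [← hexp]
    exact hch
  -- union bound on the bad set
  set Bad : Set Ω := ⋃ p : Fin m × Fin m,
    {ω | ε < |(1 / (T : ℝ)) * ∑ t, X t ω p.1 * X t ω p.2 - Sig p.1 p.2|} with hBadDef
  have hexple : Real.exp (-((T : ℝ) * ε ^ 2 / (16 * L ^ 4))) ≤ ((m:ℝ) ^ 3)⁻¹ := by
    have hq : (48 * L ^ 4 / c ^ 2) * ((K : ℝ) ^ 2 * Real.log m) * ε ^ 2 ≤ (T:ℝ) * ε ^ 2 :=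
      mul_le_mul_of_nonneg_right hT (sq_nonneg ε)
    have hqeq : (48 * L ^ 4 / c ^ 2) * ((K : ℝ) ^ 2 * Real.log m) * ε ^ 2
        = 48 * L ^ 4 * Real.log m := by
      rw [hεdef, div_pow]
      field_simp
    have h48 : 48 * L ^ 4 * Real.log m ≤ (T:ℝ) * ε ^ 2 := by
      rw [← hqeq]; exact hq
    have h3 : 3 * Real.log m ≤ (T : ℝ) * ε ^ 2 / (16 * L ^ 4) := by
      rw [le_div_iff₀ (by positivity)]
      nlinarith
    calc Real.exp (-((T : ℝ) * ε ^ 2 / (16 * L ^ 4)))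
        ≤ Real.exp (-(3 * Real.log m)) := by
          rw [Real.exp_le_exp]; linarith
      _ = ((m:ℝ) ^ 3)⁻¹ := by
          rw [Real.exp_neg]
          congr 1
          rw [show (3:ℝ) * Real.log m = Real.log ((m:ℝ) ^ 3) by
            rw [Real.log_pow]; push_cast; ring]
          exact Real.exp_log (by positivity)
  have hBad : Pr Bad ≤ ENNReal.ofReal (2 / m) := by
    calc Pr Bad ≤ ∑' p : Fin m × Fin m,
          Pr {ω | ε < |(1 / (T : ℝ)) * ∑ t, X t ω p.1 * X t ω p.2 - Sig p.1 p.2|} :=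
          measure_iUnion_le _
      _ = ∑ p : Fin m × Fin m,
          Pr {ω | ε < |(1 / (T : ℝ)) * ∑ t, X t ω p.1 * X t ω p.2 - Sig p.1 p.2|} :=
          tsum_fintype _
      _ ≤ ∑ _p : Fin m × Fin m,
          ENNReal.ofReal (2 * Real.exp (-((T : ℝ) * ε ^ 2 / (16 * L ^ 4)))) :=
          Finset.sum_le_sum fun p _ => key p.1 p.2
      _ = ((m * m : ℕ) : ENNReal) *
          ENNReal.ofReal (2 * Real.exp (-((T : ℝ) * ε ^ 2 / (16 * L ^ 4)))) := by
          rw [Finset.sum_const, Finset.card_univ, Fintype.card_prod, Fintype.card_fin,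
            nsmul_eq_mul]
      _ = ENNReal.ofReal (((m * m : ℕ) : ℝ) *
          (2 * Real.exp (-((T : ℝ) * ε ^ 2 / (16 * L ^ 4))))) := by
          rw [← ENNReal.ofReal_natCast (m * m), ← ENNReal.ofReal_mul (by positivity)]
      _ ≤ ENNReal.ofReal (2 / m) := by
          apply ENNReal.ofReal_le_ofReal
          have hcast : ((m * m : ℕ) : ℝ) = (m : ℝ) * m := by push_cast; ring
          rw [hcast]
          have h1 : ((m:ℝ) * m) * (2 * Real.exp (-((T : ℝ) * ε ^ 2 / (16 * L ^ 4))))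
              ≤ ((m:ℝ) * m) * (2 * ((m:ℝ) ^ 3)⁻¹) :=
            mul_le_mul_of_nonneg_left (by linarith [hexple]) (by positivity)
          have h2 : ((m:ℝ) * m) * (2 * ((m:ℝ) ^ 3)⁻¹) = 2 / m := by
            field_simp
          linarith
  -- the good event contains the complement of Bad
  set EV : Set Ω := {ω |
            (∀ i j, i ≠ j →
              |(1 / (T : ℝ)) * ∑ t, X t ω i * X t ω j| /
                  Real.sqrt (((1 / (T : ℝ)) * ∑ t, X t ω i * X t ω i) *
                    ((1 / (T : ℝ)) * ∑ t, X t ω j * X t ω j))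
                < 1 / (2 * (K : ℝ) - 1)) ∧
            (∀ u : Fin m → ℝ,
              (∑ j ∈ Sstarᶜ, |u j|) ≤ 3 * ∑ j ∈ Sstar, |u j| →
              kS ^ 2 / 2 * (∑ j ∈ Sstar, u j ^ 2)
                ≤ ∑ i, ∑ j, u i * ((1 / (T : ℝ)) * ∑ t, X t ω i * X t ω j) * u j)} with hEVdef
  have hsubset : Badᶜ ⊆ EV := by
    intro ω hω
    have hdev : ∀ i j : Fin m,
        |(1 / (T : ℝ)) * ∑ t, X t ω i * X t ω j - Sig i j| ≤ ε := by
      intro i j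
      by_contra hcon
      push_neg at hcon
      exact hω (Set.mem_iUnion.mpr ⟨(i, j), hcon⟩)
    constructor
    · intro i j hij
      exact coh_det hk1 hν hεν (hdiag i) (hdiag j) (hcoh i j hij)
        (hdev i i) (hdev j j) (hdev i j)
    · intro u hu
      exact re_det hK hcard hε0.le hεκ
        (fun i j => hdev i j) u hu (hre u hu)
  -- conclude
  have hone : (1 : ℝ≥0∞) ≤ Pr EV + Pr Bad := by
    have huniv : (Set.univ : Set Ω) ⊆ EV ∪ Bad := by
      intro ω _
      by_cases h : ω ∈ Bad
      · exact Or.inr h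
      · exact Or.inl (hsubset h)
    calc (1 : ℝ≥0∞) = Pr Set.univ := (measure_univ).symm
      _ ≤ Pr (EV ∪ Bad) := measure_mono huniv
      _ ≤ Pr EV + Pr Bad := measure_union_le _ _
  have hfinal : (1 : ℝ≥0∞) ≤ Pr EV + ENNReal.ofReal (2 / m) :=
    hone.trans (add_le_add_right hBad _)
  have hrpow : ((m:ℝ)) ^ (-(1:ℝ)) = ((m:ℝ))⁻¹ := Real.rpow_neg_one _
  calc ENNReal.ofReal (1 - 2 * (m : ℝ) ^ (-(1:ℝ)))
      = ENNReal.ofReal (1 - 2 / m) := by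
        rw [hrpow, ← div_eq_mul_inv]
    _ = 1 - ENNReal.ofReal (2 / m) := by
        rw [ENNReal.ofReal_sub _ (by positivity), ENNReal.ofReal_one]
    _ ≤ Pr EV := tsub_le_iff_right.mpr hfinal
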